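/- Let μ and ν be finite positive Borel measures on ℝ with Herglotz functions F_μ(z) = ∫ (1+tz)/(t-z) dμ(t) and F_ν. If F_μ = F_ν on ℂ⁺, then μ = ν. -/

import Mathlib

open MeasureTheory

noncomputable section
namespace Stmt8Aux
open Measure Filter Real Topology BoundedContinuousFunction Complex

variable (f : ℝ →ᵇ ℝ)

lemma norm_bd (y t u : ℝ) :
    ‖f (t + y * u) * (1 + u ^ 2)⁻¹‖ ≤ ‖f‖ * (1 + u ^ 2)⁻¹ := by
  rw [norm_mul, norm_inv, Real.norm_eq_abs (1 + u ^ 2), abs_of_pos (by positivity : (0:ℝ) < 1 + u ^ 2)]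
  exact mul_le_mul_of_nonneg_right (f.norm_coe_le_norm _) (by positivity)

lemma cont_int (y t : ℝ) : Continuous fun u : ℝ => f (t + y * u) * (1 + u ^ 2)⁻¹ :=
  (f.continuous.comp (continuous_const.add (continuous_const.mul continuous_id))).mul
    ((continuous_const.add (continuous_pow 2)).inv₀ fun u => (by positivity : (0:ℝ) < 1 + u ^ 2).ne')

def Q (y t : ℝ) : ℝ := ∫ u : ℝ, f (t + y * u) * (1 + u ^ 2)⁻¹

lemma Q_bound (y t : ℝ) : ‖Q f y t‖ ≤ π * ‖f‖ := by
  have h := norm_integral_le_of_norm_le (μ := (volume : Measure ℝ))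
    (f := fun u : ℝ => f (t + y * u) * (1 + u ^ 2)⁻¹)
    (g := fun u : ℝ => ‖f‖ * (1 + u ^ 2)⁻¹)
    (integrable_inv_one_add_sq.const_mul _)
    (Filter.Eventually.of_forall fun u => norm_bd f y t u)
  calc ‖Q f y t‖ ≤ ∫ u : ℝ, ‖f‖ * (1 + u ^ 2)⁻¹ := h
    _ = π * ‖f‖ := by rw [integral_const_mul, integral_univ_inv_one_add_sq]; ring

lemma Q_continuous (y : ℝ) : Continuous (Q f y) := by
  refine continuous_of_dominated (F := fun t u => f (t + y * u) * (1 + u ^ 2)⁻¹)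
    (bound := fun u => ‖f‖ * (1 + u ^ 2)⁻¹)
    (fun t => (cont_int f y t).aestronglyMeasurable)
    (fun t => Filter.Eventually.of_forall fun u => norm_bd f y t u)
    (integrable_inv_one_add_sq.const_mul _)
    (Filter.Eventually.of_forall fun u => ?_)
  exact (f.continuous.comp (continuous_id.add (continuous_const.mul continuous_const))).mul
    continuous_const

lemma Q_tendsto (t : ℝ) :
    Tendsto (fun y => Q f y t) (𝓝[>] (0:ℝ)) (𝓝 (π * f t)) := by
  have key : Tendsto (fun y => Q f y t) (𝓝[>] (0:ℝ)) (𝓝 (∫ u : ℝ, f t * (1 + u ^ 2)⁻¹)) := by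
    refine tendsto_integral_filter_of_dominated_convergence
      (bound := fun u => ‖f‖ * (1 + u ^ 2)⁻¹)
      (Filter.Eventually.of_forall fun y => (cont_int f y t).aestronglyMeasurable)
      (Filter.Eventually.of_forall fun y => Filter.Eventually.of_forall fun u => norm_bd f y t u)
      (integrable_inv_one_add_sq.const_mul _)
      (Filter.Eventually.of_forall fun u => ?_)
    have h1 : Tendsto (fun y : ℝ => t + y * u) (𝓝[>] (0:ℝ)) (𝓝 t) := by
      have h2 : Tendsto (fun y : ℝ => t + y * u) (𝓝 (0:ℝ)) (𝓝 (t + 0 * u)) :=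
        tendsto_const_nhds.add (tendsto_id.mul tendsto_const_nhds)
      simpa using h2.mono_left nhdsWithin_le_nhds
    exact ((f.continuous.tendsto t).comp h1).mul tendsto_const_nhds
  have h3 : (∫ u : ℝ, f t * (1 + u ^ 2)⁻¹) = π * f t := by
    rw [integral_const_mul, integral_univ_inv_one_add_sq]; ring
  rwa [h3] at key

lemma substitution (y : ℝ) (hy : 0 < y) (t : ℝ) :
    ∫ x : ℝ, f x * (y / ((x - t) ^ 2 + y ^ 2)) = Q f y t := by
  have e1 : (∫ x : ℝ, f x * (y / ((x - t) ^ 2 + y ^ 2)))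
      = ∫ x : ℝ, f (t + x) * (y / (x ^ 2 + y ^ 2)) := by
    rw [← integral_add_left_eq_self (μ := volume) (fun x : ℝ => f x * (y / ((x - t) ^ 2 + y ^ 2))) t]
    simp
  have e2 : (∫ x : ℝ, f (t + x) * (y / (x ^ 2 + y ^ 2)))
      = |y| • ∫ u : ℝ, f (t + y * u) * (y / ((y * u) ^ 2 + y ^ 2)) := by
    rw [Measure.integral_comp_mul_left (fun x : ℝ => f (t + x) * (y / (x ^ 2 + y ^ 2))) y]
    rw [abs_inv, ← smul_assoc]
    rw [smul_eq_mul, smul_eq_mul, mul_inv_cancel₀ (abs_pos.mpr hy.ne').ne', one_mul]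
  rw [e1, e2, abs_of_pos hy, Q, ← integral_smul]
  congr 1
  ext u
  have hne : (y * u) ^ 2 + y ^ 2 ≠ 0 := by positivity
  have hy0 : y ≠ 0 := hy.ne'
  have hD : (y * u) ^ 2 + y ^ 2 = y ^ 2 * (1 + u ^ 2) := by ring
  rw [hD, smul_eq_mul]
  field_simp

lemma integrable_kernel (t y : ℝ) (hy : 0 < y) :
    Integrable (fun x : ℝ => y / ((x - t) ^ 2 + y ^ 2)) := by
  have h0 : Integrable (fun u : ℝ => y⁻¹ * (1 + u ^ 2)⁻¹) :=
    integrable_inv_one_add_sq.const_mul _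
  have h1 : Integrable (fun x : ℝ => y⁻¹ * (1 + (x * y⁻¹) ^ 2)⁻¹) :=
    h0.comp_mul_right' (by positivity)
  have h2 : Integrable (fun x : ℝ => y⁻¹ * (1 + ((x - t) * y⁻¹) ^ 2)⁻¹) :=
    h1.comp_sub_right t
  refine h2.congr (Filter.Eventually.of_forall fun x => ?_)
  field_simp
  ring
variable {μ ν : Measure ℝ} [IsFiniteMeasure μ] [IsFiniteMeasure ν]

lemma sub_ne (z : ℂ) (hz : 0 < z.im) (t : ℝ) : (t : ℂ) - z ≠ 0 := by
  intro h0
  have h1 : ((t : ℂ) - z).im = 0 := by rw [h0]; simp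
  simp only [Complex.sub_im, Complex.ofReal_im, zero_sub, neg_eq_zero] at h1
  exact hz.ne' (by linarith)

lemma integrable_inv (z : ℂ) (hz : 0 < z.im) :
    Integrable (fun t : ℝ => ((t : ℂ) - z)⁻¹) μ := by
  refine Integrable.mono' (integrable_const ((z.im)⁻¹)) ?_
    (Filter.Eventually.of_forall fun t => ?_)
  · exact (((Complex.continuous_ofReal.sub continuous_const).inv₀
      (sub_ne z hz))).aestronglyMeasurable
  · rw [norm_inv]
    refine inv_anti₀ hz ?_
    calc z.im = |((t:ℂ) - z).im| := by
          simp [abs_of_pos hz]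
      _ ≤ ‖(t:ℂ) - z‖ := Complex.abs_im_le_norm _

lemma herglotz_decomp (z : ℂ) (hz : 0 < z.im) :
    (∫ t : ℝ, (1 + (t : ℂ) * z) / ((t : ℂ) - z) ∂μ)
      = ((μ Set.univ).toReal : ℂ) * z + (1 + z ^ 2) * ∫ t : ℝ, ((t : ℂ) - z)⁻¹ ∂μ := by
  have e : ∀ t : ℝ, (1 + (t : ℂ) * z) / ((t : ℂ) - z)
      = z + (1 + z ^ 2) * ((t : ℂ) - z)⁻¹ := by
    intro t
    have hne := sub_ne z hz t
    field_simp
    ring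
  simp_rw [e]
  rw [integral_add (integrable_const z) ((integrable_inv z hz).const_mul _),
    integral_const, integral_const_mul, Complex.real_smul, measureReal_def]

lemma mass_eq
    (h : ∀ z : ℂ, 0 < z.im →
      ∫ t : ℝ, (1 + (t : ℂ) * z) / ((t : ℂ) - z) ∂μ
        = ∫ t : ℝ, (1 + (t : ℂ) * z) / ((t : ℂ) - z) ∂ν) :
    μ Set.univ = ν Set.univ := by
  have hI := h Complex.I (by simp)
  have e : ∀ t : ℝ, (1 + (t : ℂ) * Complex.I) / ((t : ℂ) - Complex.I) = Complex.I := by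
    intro t
    have hne := sub_ne Complex.I (by simp) t
    have hsq : Complex.I ^ 2 = -1 := Complex.I_sq
    field_simp
    linear_combination hsq
  simp_rw [e, integral_const, Complex.real_smul] at hI
  have h2 : ((μ Set.univ).toReal : ℂ) = ((ν Set.univ).toReal : ℂ) :=
    mul_right_cancel₀ Complex.I_ne_zero hI
  have h3 : (μ Set.univ).toReal = (ν Set.univ).toReal := by exact_mod_cast h2
  exact (ENNReal.toReal_eq_toReal_iff' (measure_ne_top μ _) (measure_ne_top ν _)).mp h3

lemma cauchy_eq
    (h : ∀ z : ℂ, 0 < z.im →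
      ∫ t : ℝ, (1 + (t : ℂ) * z) / ((t : ℂ) - z) ∂μ
        = ∫ t : ℝ, (1 + (t : ℂ) * z) / ((t : ℂ) - z) ∂ν)
    (z : ℂ) (hz : 0 < z.im) (hz1 : z.im ≠ 1) :
    (∫ t : ℝ, ((t : ℂ) - z)⁻¹ ∂μ) = ∫ t : ℝ, ((t : ℂ) - z)⁻¹ ∂ν := by
  have hzz := h z hz
  rw [herglotz_decomp z hz, herglotz_decomp z hz, mass_eq h] at hzz
  have hsq : Complex.I ^ 2 = -1 := Complex.I_sq
  have hfac : (1 : ℂ) + z ^ 2 = (z - Complex.I) * (z + Complex.I) := by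
    linear_combination hsq
  have hne : (1 : ℂ) + z ^ 2 ≠ 0 := by
    rw [hfac]
    refine mul_ne_zero (fun h0 => ?_) (fun h0 => ?_)
    · have := congrArg Complex.im h0
      simp only [Complex.sub_im, Complex.I_im, Complex.zero_im] at this
      exact hz1 (by linarith)
    · have := congrArg Complex.im h0
      simp only [Complex.add_im, Complex.I_im, Complex.zero_im] at this
      linarith
  exact mul_left_cancel₀ hne (add_left_cancel hzz)

lemma poisson_eq
    (h : ∀ z : ℂ, 0 < z.im →
      ∫ t : ℝ, (1 + (t : ℂ) * z) / ((t : ℂ) - z) ∂μ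
        = ∫ t : ℝ, (1 + (t : ℂ) * z) / ((t : ℂ) - z) ∂ν)
    (x y : ℝ) (hy : 0 < y) (hy1 : y < 1) :
    (∫ t : ℝ, y / ((t - x) ^ 2 + y ^ 2) ∂μ) = ∫ t : ℝ, y / ((t - x) ^ 2 + y ^ 2) ∂ν := by
  set z : ℂ := (x : ℂ) + (y : ℂ) * Complex.I with hzdef
  have hzim : z.im = y := by simp [hzdef]
  have hz : 0 < z.im := by rw [hzim]; exact hy
  have hkey := cauchy_eq h z hz (by rw [hzim]; exact hy1.ne)
  have him : ∀ t : ℝ, (((t : ℂ) - z)⁻¹).im = y / ((t - x) ^ 2 + y ^ 2) := by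
    intro t
    rw [Complex.inv_im]
    have h1 : ((t : ℂ) - z).im = -y := by simp [hzdef]
    have h2 : ((t : ℂ) - z).re = t - x := by simp [hzdef]
    rw [Complex.normSq_apply, h1, h2]
    ring_nf
  have himμ := integral_im (integrable_inv z hz (μ := μ))
  have himν := integral_im (integrable_inv z hz (μ := ν))
  simp only [RCLike.im_eq_complex_im] at himμ himν
  simp_rw [him] at himμ himν
  rw [himμ, himν, hkey]

lemma int_Q_eq (f : ℝ →ᵇ ℝ) (hf : ∀ x, 0 ≤ f x)
    (hpoisson : ∀ x y : ℝ, 0 < y → y < 1 →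
      (∫ t : ℝ, y / ((t - x) ^ 2 + y ^ 2) ∂μ) = ∫ t : ℝ, y / ((t - x) ^ 2 + y ^ 2) ∂ν)
    (y : ℝ) (hy : 0 < y) (hy1 : y < 1) :
    ∫ t, Q f y t ∂μ = ∫ t, Q f y t ∂ν := by
  have kern_pos : ∀ t x : ℝ, 0 < y / ((x - t) ^ 2 + y ^ 2) := fun t x => by positivity
  have key : ∀ (ρ : Measure ℝ) [IsFiniteMeasure ρ],
      ∫ t, Q f y t ∂ρ = ∫ x : ℝ, f x * ∫ t : ℝ, y / ((x - t) ^ 2 + y ^ 2) ∂ρ := by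
    intro ρ _
    have huncurry : AEStronglyMeasurable
        (Function.uncurry fun t x : ℝ => f x * (y / ((x - t) ^ 2 + y ^ 2))) (ρ.prod volume) := by
      apply Continuous.aestronglyMeasurable
      apply (f.continuous.comp continuous_snd).mul
      exact continuous_const.div
        (((continuous_snd.sub continuous_fst).pow 2).add continuous_const)
        (fun p => by positivity)
    have hint : ∀ t : ℝ, Integrable (fun x : ℝ => f x * (y / ((x - t) ^ 2 + y ^ 2))) :=
      fun t => (integrable_kernel t y hy).bdd_mul f.continuous.aestronglyMeasurable
        (Filter.Eventually.of_forall fun x => f.norm_coe_le_norm x)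
    have hnorm : ∀ t : ℝ, (∫ x : ℝ, ‖f x * (y / ((x - t) ^ 2 + y ^ 2))‖) = Q f y t := by
      intro t
      rw [← substitution f y hy t]
      congr 1
      ext x
      exact Real.norm_of_nonneg (mul_nonneg (hf x) (kern_pos t x).le)
    have hprod : Integrable
        (Function.uncurry fun t x : ℝ => f x * (y / ((x - t) ^ 2 + y ^ 2))) (ρ.prod volume) := by
      refine (integrable_prod_iff huncurry).2 ⟨Filter.Eventually.of_forall hint, ?_⟩
      have : (fun t : ℝ => ∫ x : ℝ, ‖f x * (y / ((x - t) ^ 2 + y ^ 2))‖) = Q f y := by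
        ext t; exact hnorm t
      simp only [Function.uncurry_apply_pair]
      rw [this]
      exact Integrable.mono' (integrable_const (π * ‖f‖))
        (Q_continuous f y).aestronglyMeasurable
        (Filter.Eventually.of_forall fun t => Q_bound f y t)
    calc ∫ t, Q f y t ∂ρ
        = ∫ t, ∫ x : ℝ, f x * (y / ((x - t) ^ 2 + y ^ 2)) ∂volume ∂ρ := by
          congr 1; ext t; exact (substitution f y hy t).symm
      _ = ∫ x : ℝ, ∫ t, f x * (y / ((x - t) ^ 2 + y ^ 2)) ∂ρ ∂volume :=
          integral_integral_swap hprod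
      _ = ∫ x : ℝ, f x * ∫ t : ℝ, y / ((x - t) ^ 2 + y ^ 2) ∂ρ ∂volume := by
          congr 1; ext x; exact integral_const_mul _ _
  rw [key μ, key ν]
  have hsq : ∀ x t : ℝ, (x - t) ^ 2 = (t - x) ^ 2 := fun x t => by ring
  congr 1
  ext x
  congr 1
  simp_rw [hsq x]
  exact hpoisson x y hy hy1

lemma int_eq (f : ℝ →ᵇ ℝ) (hf : ∀ x, 0 ≤ f x)
    (hpoisson : ∀ x y : ℝ, 0 < y → y < 1 →
      (∫ t : ℝ, y / ((t - x) ^ 2 + y ^ 2) ∂μ) = ∫ t : ℝ, y / ((t - x) ^ 2 + y ^ 2) ∂ν) :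
    ∫ x, f x ∂μ = ∫ x, f x ∂ν := by
  have hQmeas : ∀ (ρ : Measure ℝ), ∀ y : ℝ, AEStronglyMeasurable (Q f y) ρ :=
    fun ρ y => (Q_continuous f y).aestronglyMeasurable
  have tendsto_gen : ∀ (ρ : Measure ℝ) [IsFiniteMeasure ρ],
      Tendsto (fun y => ∫ t, Q f y t ∂ρ) (𝓝[>] (0:ℝ)) (𝓝 (∫ t, π * f t ∂ρ)) := by
    intro ρ _
    refine tendsto_integral_filter_of_dominated_convergence (bound := fun _ => π * ‖f‖)
      (Filter.Eventually.of_forall fun y => hQmeas ρ y)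
      (Filter.Eventually.of_forall fun y => Filter.Eventually.of_forall fun t => Q_bound f y t)
      (integrable_const _)
      (Filter.Eventually.of_forall fun t => Q_tendsto f t)
  have heq : ∀ᶠ y in 𝓝[>] (0:ℝ), (fun y => ∫ t, Q f y t ∂μ) y = (fun y => ∫ t, Q f y t ∂ν) y := by
    filter_upwards [Ioo_mem_nhdsGT_of_mem (by norm_num : (0:ℝ) ∈ Set.Ico 0 1)] with y hy
    exact int_Q_eq f hf hpoisson y hy.1 hy.2
  have hlim := tendsto_nhds_unique ((tendsto_gen μ).congr' heq) (tendsto_gen ν)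
  simp_rw [integral_const_mul] at hlim
  exact mul_left_cancel₀ Real.pi_ne_zero hlim.symm |>.symm

end Stmt8Aux
end

/-- Uniqueness in the Herglotz representation: if two finite positive Borel measures on `ℝ`
have the same Herglotz function `F(z) = ∫ (1+tz)/(t-z) dν(t)` on the upper half plane,
then they are equal. -/
theorem stmt8 (μ ν : Measure ℝ) [IsFiniteMeasure μ] [IsFiniteMeasure ν]
    (h : ∀ z : ℂ, 0 < z.im →
      ∫ t : ℝ, (1 + (t : ℂ) * z) / ((t : ℂ) - z) ∂μ
        = ∫ t : ℝ, (1 + (t : ℂ) * z) / ((t : ℂ) - z) ∂ν) :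
    μ = ν := by
  have hpoisson := Stmt8Aux.poisson_eq (μ := μ) (ν := ν) h
  apply ext_of_forall_lintegral_eq_of_IsFiniteMeasure
  intro g
  set f : BoundedContinuousFunction ℝ ℝ :=
    BoundedContinuousFunction.comp ((↑) : NNReal → ℝ) (isometry_subtype_coe.lipschitz) g
    with hfdef
  have hfg : ∀ x, f x = (g x : ℝ) := fun x => rfl
  have hf : ∀ x, 0 ≤ f x := fun x => by rw [hfg]; exact (g x).2
  have hint := Stmt8Aux.int_eq (μ := μ) (ν := ν) f hf
    (fun x y hy hy1 => hpoisson x y hy hy1)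
  have h1 : ∫⁻ x, (g x : ENNReal) ∂μ = ENNReal.ofReal (∫ x, (g x : ℝ) ∂μ) :=
    lintegral_coe_eq_integral _ (by
      exact f.integrable μ)
  have h2 : ∫⁻ x, (g x : ENNReal) ∂ν = ENNReal.ofReal (∫ x, (g x : ℝ) ∂ν) :=
    lintegral_coe_eq_integral _ (by
      exact f.integrable ν)
  rw [h1, h2]
  exact congrArg ENNReal.ofReal (by simpa [hfg] using hint)
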